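/- Suppose the positive integers m_A(T) ≤ m_B(T) and ρ(T) and the reals b(T) > 0 satisfy: m_A(T) → ∞; ρ(T) → ∞ with ρ(T) ≤ m_A(T) and ρ(T)/m_A(T) → 0; b(T) → 0 and T·b(T) → ∞; m_B(T)/T → 1 and m_A(T)/T → 0. Then there exist a constant Λ > 0 and T₀ ∈ ℕ such that for every T ≥ T₀ and every pair of integer intervals A = {a₁, …, a₁+m_A(T)−1} ⊆ {1, …, T} and B = {b₁, …, b₁+m_B(T)−1} ⊆ {1, …, T}: (i) Σ_{t∈A} Σ_{t',t''∈B, 0<|t'−t''|≤ρ(T)} K( (|t−t'|/T − u₀)/b(T) ) · K( (|t−t''|/T − u₀)/b(T) ) ≤ Λ · m_A(T) · m_B(T) · ρ(T) · b(T); and (ii) Σ_{t∈A} Σ_{t'∈B} K²( (|t−t'|/T − u₀)/b(T) ) ≤ Λ · m_A(T) · m_B(T) · b(T). -/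
import Mathlib

open scoped BigOperators
open Filter

noncomputable section

private lemma cardLe (S : Finset ℕ) (α L : ℝ) (hL : 0 ≤ L)
    (h : ∀ n ∈ S, α ≤ (n:ℝ) ∧ (n:ℝ) ≤ α + L) : (S.card : ℝ) ≤ L + 1 := by
  rcases S.eq_empty_or_nonempty with rfl | ⟨n0, hn0⟩
  · simp; linarith
  have hsub : S ⊆ Finset.Icc ⌈α⌉₊ ⌊α + L⌋₊ := by
    intro n hn
    obtain ⟨h1, h2⟩ := h n hn
    exact Finset.mem_Icc.mpr ⟨Nat.ceil_le.mpr h1, Nat.le_floor h2⟩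
  have hαL : (0:ℝ) ≤ α + L := le_trans (Nat.cast_nonneg n0) (h n0 hn0).2
  have hcard := Finset.card_le_card hsub
  rw [Nat.card_Icc] at hcard
  by_cases hc : ⌈α⌉₊ ≤ ⌊α + L⌋₊ + 1
  · have h3 : (S.card : ℝ) ≤ ((⌊α + L⌋₊ : ℝ) + 1) - (⌈α⌉₊ : ℝ) := by
      have := (Nat.cast_le (α := ℝ)).mpr hcard
      rwa [Nat.cast_sub hc, Nat.cast_add, Nat.cast_one] at this
    have f1 := Nat.floor_le hαL
    have f2 := Nat.le_ceil α
    linarith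
  · have h0 : ⌊α + L⌋₊ + 1 - ⌈α⌉₊ = 0 := Nat.sub_eq_zero_of_le (le_of_lt (lt_of_not_ge hc))
    rw [h0, Nat.le_zero] at hcard
    rw [hcard]; simp; linarith

private lemma sum_kernel_le (K : ℝ → ℝ) (hK0 : ∀ x, 0 ≤ K x) (hKtop : ∀ x, K x ≤ K 0)
    (hKsupp : ∀ x, 1 < |x| → K x = 0) (u₀ bT Tr : ℝ) (hb : 0 < bT) (hT : 0 < Tr)
    (t : ℕ) (s : Finset ℕ) :
    ∑ t' ∈ s, K ((|(t:ℝ) - (t':ℝ)| / Tr - u₀) / bT) ≤ K 0 * (4 * Tr * bT + 2) := by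
  classical
  set f : ℕ → ℝ := fun n => K ((|(t:ℝ) - (n:ℝ)| / Tr - u₀) / bT) with hf
  have hKne : ∀ n : ℕ, f n ≠ 0 →
      (u₀ - bT) * Tr ≤ |(t:ℝ) - (n:ℝ)| ∧ |(t:ℝ) - (n:ℝ)| ≤ (u₀ + bT) * Tr := by
    intro n hn
    have habs : |(|(t:ℝ) - (n:ℝ)| / Tr - u₀) / bT| ≤ 1 := by
      by_contra hcon
      exact hn (hKsupp _ (lt_of_not_ge hcon))
    rw [abs_le] at habs
    obtain ⟨hl, hr⟩ := habs
    have hl' : -bT ≤ |(t:ℝ) - (n:ℝ)| / Tr - u₀ := by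
      have := (le_div_iff₀ hb).mp hl
      linarith
    have hr' : |(t:ℝ) - (n:ℝ)| / Tr - u₀ ≤ bT := by
      have := (div_le_iff₀ hb).mp hr
      linarith
    constructor
    · have := (le_div_iff₀ hT).mp (show u₀ - bT ≤ |(t:ℝ) - (n:ℝ)| / Tr by linarith)
      linarith
    · have := (div_le_iff₀ hT).mp (show |(t:ℝ) - (n:ℝ)| / Tr ≤ u₀ + bT by linarith)
      linarith
  set P := s.filter (fun n => f n ≠ 0) with hP
  have hsum : ∑ n ∈ s, f n = ∑ n ∈ P, f n := (Finset.sum_filter_ne_zero s).symm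
  have hsumP : ∑ n ∈ P, f n ≤ (P.card : ℝ) * K 0 := by
    calc ∑ n ∈ P, f n ≤ ∑ _n ∈ P, K 0 := Finset.sum_le_sum (fun n _ => hKtop _)
      _ = (P.card : ℝ) * K 0 := by rw [Finset.sum_const, nsmul_eq_mul]
  set P₁ := P.filter (fun n => n ≤ t) with hP₁
  set P₂ := P.filter (fun n => ¬ n ≤ t) with hP₂
  have hcards : P₁.card + P₂.card = P.card :=
    Finset.card_filter_add_card_filter_not _
  have hc1 : (P₁.card : ℝ) ≤ 2 * Tr * bT + 1 := by
    apply cardLe _ ((t:ℝ) - (u₀ + bT) * Tr) (2 * Tr * bT) (by positivity)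
    intro n hn
    simp only [hP₁, hP, Finset.mem_filter] at hn
    obtain ⟨⟨-, hne⟩, hnt⟩ := hn
    obtain ⟨hD1, hD2⟩ := hKne n hne
    have hcast : (n:ℝ) ≤ (t:ℝ) := Nat.cast_le.mpr hnt
    rw [abs_of_nonneg (by linarith : (0:ℝ) ≤ (t:ℝ) - (n:ℝ))] at hD1 hD2
    constructor <;> nlinarith
  have hc2 : (P₂.card : ℝ) ≤ 2 * Tr * bT + 1 := by
    apply cardLe _ ((t:ℝ) + (u₀ - bT) * Tr) (2 * Tr * bT) (by positivity)
    intro n hn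
    simp only [hP₂, hP, Finset.mem_filter] at hn
    obtain ⟨⟨-, hne⟩, hnt⟩ := hn
    obtain ⟨hD1, hD2⟩ := hKne n hne
    have hcast : (t:ℝ) ≤ (n:ℝ) := Nat.cast_le.mpr (le_of_not_ge hnt)
    rw [abs_of_nonpos (by linarith : (t:ℝ) - (n:ℝ) ≤ 0), neg_sub] at hD1 hD2
    constructor <;> nlinarith
  have hPcard : (P.card : ℝ) ≤ 4 * Tr * bT + 2 := by
    have hcc : (P.card:ℝ) = (P₁.card:ℝ) + (P₂.card:ℝ) := by exact_mod_cast hcards.symm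
    linarith
  calc ∑ n ∈ s, f n = ∑ n ∈ P, f n := hsum
    _ ≤ (P.card : ℝ) * K 0 := hsumP
    _ ≤ (4 * Tr * bT + 2) * K 0 := mul_le_mul_of_nonneg_right hPcard (hK0 0)
    _ = K 0 * (4 * Tr * bT + 2) := mul_comm _ _

/-- Lemma 4 of the paper: kernel double-sum bounds when the
`B` block nearly fills `{1, …, T}` (`m_B/T → 1`) and `m_A/T → 0`. -/
theorem statement15
    (K : ℝ → ℝ) (hK0 : ∀ x, 0 ≤ K x) (hKsymm : ∀ x, K (-x) = K x)
    (hKsupp : ∀ x, 1 < |x| → K x = 0)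
    (hKmono : ∀ x y, 0 ≤ x → x ≤ y → y ≤ 1 → K y ≤ K x)
    (u₀ : ℝ) (hu₀ : u₀ ∈ Set.Ioo (0 : ℝ) 1)
    (mA mB ρ : ℕ → ℕ) (b : ℕ → ℝ)
    (hmApos : ∀ T, 0 < mA T) (hρpos : ∀ T, 0 < ρ T)
    (hAB : ∀ T, mA T ≤ mB T) (hρA : ∀ T, ρ T ≤ mA T)
    (hbpos : ∀ T, 0 < b T)
    (hmA : Tendsto (fun T : ℕ => (mA T : ℝ)) atTop atTop)
    (hρ : Tendsto (fun T : ℕ => (ρ T : ℝ)) atTop atTop)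
    (hρmA : Tendsto (fun T : ℕ => (ρ T : ℝ) / (mA T : ℝ)) atTop (nhds 0))
    (hb0 : Tendsto b atTop (nhds 0))
    (hTb : Tendsto (fun T : ℕ => (T : ℝ) * b T) atTop atTop)
    (hmBT : Tendsto (fun T : ℕ => (mB T : ℝ) / (T : ℝ)) atTop (nhds 1))
    (hmAT : Tendsto (fun T : ℕ => (mA T : ℝ) / (T : ℝ)) atTop (nhds 0)) :
    ∃ Λ : ℝ, 0 < Λ ∧ ∃ T₀ : ℕ, ∀ T, T₀ ≤ T →
      ∀ a₁ b₁ : ℕ, 1 ≤ a₁ → a₁ + mA T ≤ T + 1 → 1 ≤ b₁ → b₁ + mB T ≤ T + 1 →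
        ((∑ t ∈ Finset.Ico a₁ (a₁ + mA T),
            ∑ t' ∈ Finset.Ico b₁ (b₁ + mB T),
            ∑ t'' ∈ (Finset.Ico b₁ (b₁ + mB T)).filter
                (fun t'' => t'' ≠ t' ∧ |(t'' : ℝ) - (t' : ℝ)| ≤ (ρ T : ℝ)),
              K ((|(t : ℝ) - (t' : ℝ)| / (T : ℝ) - u₀) / b T) *
                K ((|(t : ℝ) - (t'' : ℝ)| / (T : ℝ) - u₀) / b T))
          ≤ Λ * (mA T : ℝ) * (mB T : ℝ) * (ρ T : ℝ) * b T) ∧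
        ((∑ t ∈ Finset.Ico a₁ (a₁ + mA T),
            ∑ t' ∈ Finset.Ico b₁ (b₁ + mB T),
              (K ((|(t : ℝ) - (t' : ℝ)| / (T : ℝ) - u₀) / b T)) ^ 2)
          ≤ Λ * (mA T : ℝ) * (mB T : ℝ) * b T) := by
  classical
  have hKtop : ∀ x, K x ≤ K 0 := by
    intro x
    rcases le_or_gt (|x|) 1 with h | h
    · have hx : K x = K |x| := by
        rcases abs_choice x with h' | h'
        · rw [h']
        · rw [h', hKsymm]
      rw [hx]
      exact hKmono 0 (|x|) le_rfl (abs_nonneg x) h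
    · rw [hKsupp x h]; exact hK0 0
  refine ⟨30 * (K 0) ^ 2 + 1, by positivity, ?_⟩
  have h1 : ∀ᶠ T : ℕ in atTop, (2:ℝ) ≤ (T:ℝ) * b T := hTb.eventually_ge_atTop 2
  have h2 : ∀ᶠ T : ℕ in atTop, (1:ℝ)/2 ≤ (mB T : ℝ) / (T:ℝ) :=
    hmBT.eventually (eventually_ge_nhds (by norm_num))
  obtain ⟨T₀, hT₀⟩ := eventually_atTop.mp (h1.and h2)
  refine ⟨T₀, fun T hT a₁ b₁ ha1 ha2 hb1 hb2 => ?_⟩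
  obtain ⟨hTb2, hmB2⟩ := hT₀ T hT
  have hbT := hbpos T
  have hTpos : (0:ℝ) < (T:ℝ) := by
    rcases Nat.eq_zero_or_pos T with h | h
    · rw [h] at hTb2; norm_num at hTb2
    · exact_mod_cast h
  have hmBle : (T:ℝ) ≤ 2 * (mB T : ℝ) := by
    have := (le_div_iff₀ hTpos).mp hmB2
    linarith
  have hmBb : (1:ℝ) ≤ (mB T:ℝ) * b T := by
    nlinarith [mul_nonneg (sub_nonneg.mpr hmBle) hbT.le]
  have hkey : 4 * (T:ℝ) * b T + 2 ≤ 10 * (mB T:ℝ) * b T := by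
    nlinarith [mul_nonneg (sub_nonneg.mpr hmBle) hbT.le]
  have hsumK : ∀ t : ℕ, ∑ t' ∈ Finset.Ico b₁ (b₁ + mB T),
      K ((|(t:ℝ) - (t':ℝ)| / (T:ℝ) - u₀) / b T) ≤ K 0 * (4 * (T:ℝ) * b T + 2) :=
    fun t => sum_kernel_le K hK0 hKtop hKsupp u₀ (b T) (T:ℝ) hbT hTpos t _
  have hρ1 : (1:ℝ) ≤ (ρ T : ℝ) := by exact_mod_cast hρpos T
  have hcardA : (Finset.Ico a₁ (a₁ + mA T)).card = mA T := by
    rw [Nat.card_Ico]; omega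
  constructor
  · -- part (i)
    have hcardρ : ∀ t' : ℕ, ((((Finset.Ico b₁ (b₁ + mB T)).filter
        (fun t'' => t'' ≠ t' ∧ |(t'':ℝ) - (t':ℝ)| ≤ (ρ T:ℝ))).card : ℝ)) ≤ 3 * (ρ T:ℝ) := by
      intro t'
      have hb' := cardLe ((Finset.Ico b₁ (b₁ + mB T)).filter
          (fun t'' => t'' ≠ t' ∧ |(t'':ℝ) - (t':ℝ)| ≤ (ρ T:ℝ)))
          ((t':ℝ) - (ρ T:ℝ)) (2 * (ρ T:ℝ)) (by positivity) ?_
      · linarith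
      · intro n hn
        simp only [Finset.mem_filter] at hn
        obtain ⟨-, -, habs⟩ := hn
        rw [abs_le] at habs
        constructor <;> [linarith [habs.1]; linarith [habs.2]]
    have hinner : ∀ t t' : ℕ,
        ∑ t'' ∈ (Finset.Ico b₁ (b₁ + mB T)).filter
            (fun t'' => t'' ≠ t' ∧ |(t'':ℝ) - (t':ℝ)| ≤ (ρ T:ℝ)),
          K ((|(t:ℝ) - (t':ℝ)| / (T:ℝ) - u₀) / b T) *
            K ((|(t:ℝ) - (t'':ℝ)| / (T:ℝ) - u₀) / b T)
        ≤ K ((|(t:ℝ) - (t':ℝ)| / (T:ℝ) - u₀) / b T) * (K 0 * (3 * (ρ T:ℝ))) := by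
      intro t t'
      set g : ℕ → ℝ := fun n => K ((|(t:ℝ) - (n:ℝ)| / (T:ℝ) - u₀) / b T) with hg
      set S := (Finset.Ico b₁ (b₁ + mB T)).filter
          (fun t'' => t'' ≠ t' ∧ |(t'':ℝ) - (t':ℝ)| ≤ (ρ T:ℝ)) with hS
      calc ∑ t'' ∈ S, g t' * g t'' ≤ ∑ _t'' ∈ S, g t' * K 0 :=
            Finset.sum_le_sum (fun n _ => mul_le_mul_of_nonneg_left (hKtop _) (hK0 _))
        _ = (S.card : ℝ) * (g t' * K 0) := by rw [Finset.sum_const, nsmul_eq_mul]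
        _ ≤ (3 * (ρ T:ℝ)) * (g t' * K 0) :=
            mul_le_mul_of_nonneg_right (hcardρ t') (mul_nonneg (hK0 _) (hK0 _))
        _ = g t' * (K 0 * (3 * (ρ T:ℝ))) := by ring
    have hmid : ∀ t : ℕ,
        ∑ t' ∈ Finset.Ico b₁ (b₁ + mB T),
          ∑ t'' ∈ (Finset.Ico b₁ (b₁ + mB T)).filter
              (fun t'' => t'' ≠ t' ∧ |(t'':ℝ) - (t':ℝ)| ≤ (ρ T:ℝ)),
            K ((|(t:ℝ) - (t':ℝ)| / (T:ℝ) - u₀) / b T) *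
              K ((|(t:ℝ) - (t'':ℝ)| / (T:ℝ) - u₀) / b T)
        ≤ (K 0 * (3 * (ρ T:ℝ))) * (K 0 * (10 * (mB T:ℝ) * b T)) := by
      intro t
      calc ∑ t' ∈ Finset.Ico b₁ (b₁ + mB T), _
          ≤ ∑ t' ∈ Finset.Ico b₁ (b₁ + mB T),
              K ((|(t:ℝ) - (t':ℝ)| / (T:ℝ) - u₀) / b T) * (K 0 * (3 * (ρ T:ℝ))) :=
            Finset.sum_le_sum (fun t' _ => hinner t t')
        _ = (K 0 * (3 * (ρ T:ℝ))) * ∑ t' ∈ Finset.Ico b₁ (b₁ + mB T),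
              K ((|(t:ℝ) - (t':ℝ)| / (T:ℝ) - u₀) / b T) := by
            rw [← Finset.sum_mul]; ring
        _ ≤ (K 0 * (3 * (ρ T:ℝ))) * (K 0 * (4 * (T:ℝ) * b T + 2)) :=
            mul_le_mul_of_nonneg_left (hsumK t)
              (mul_nonneg (hK0 0) (by positivity))
        _ ≤ (K 0 * (3 * (ρ T:ℝ))) * (K 0 * (10 * (mB T:ℝ) * b T)) :=
            mul_le_mul_of_nonneg_left (mul_le_mul_of_nonneg_left hkey (hK0 0))
              (mul_nonneg (hK0 0) (by positivity))
    calc ∑ t ∈ Finset.Ico a₁ (a₁ + mA T), _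
        ≤ ∑ _t ∈ Finset.Ico a₁ (a₁ + mA T),
            (K 0 * (3 * (ρ T:ℝ))) * (K 0 * (10 * (mB T:ℝ) * b T)) :=
          Finset.sum_le_sum (fun t _ => hmid t)
      _ = (mA T : ℝ) * ((K 0 * (3 * (ρ T:ℝ))) * (K 0 * (10 * (mB T:ℝ) * b T))) := by
          rw [Finset.sum_const, hcardA, nsmul_eq_mul]
      _ ≤ (30 * (K 0) ^ 2 + 1) * (mA T : ℝ) * (mB T : ℝ) * (ρ T : ℝ) * b T := by
          nlinarith [show (0:ℝ) ≤ (mA T:ℝ) * (mB T:ℝ) * (ρ T:ℝ) * b T by positivity]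
  · -- part (ii)
    have hsq : ∀ t : ℕ,
        ∑ t' ∈ Finset.Ico b₁ (b₁ + mB T),
          (K ((|(t:ℝ) - (t':ℝ)| / (T:ℝ) - u₀) / b T)) ^ 2
        ≤ K 0 * (K 0 * (10 * (mB T:ℝ) * b T)) := by
      intro t
      calc ∑ t' ∈ Finset.Ico b₁ (b₁ + mB T),
            (K ((|(t:ℝ) - (t':ℝ)| / (T:ℝ) - u₀) / b T)) ^ 2
          ≤ ∑ t' ∈ Finset.Ico b₁ (b₁ + mB T),
            K 0 * K ((|(t:ℝ) - (t':ℝ)| / (T:ℝ) - u₀) / b T) := by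
            apply Finset.sum_le_sum
            intro t' _
            rw [sq]
            exact mul_le_mul_of_nonneg_right (hKtop _) (hK0 _)
        _ = K 0 * ∑ t' ∈ Finset.Ico b₁ (b₁ + mB T),
            K ((|(t:ℝ) - (t':ℝ)| / (T:ℝ) - u₀) / b T) := by rw [Finset.mul_sum]
        _ ≤ K 0 * (K 0 * (4 * (T:ℝ) * b T + 2)) :=
            mul_le_mul_of_nonneg_left (hsumK t) (hK0 0)
        _ ≤ K 0 * (K 0 * (10 * (mB T:ℝ) * b T)) :=
            mul_le_mul_of_nonneg_left (mul_le_mul_of_nonneg_left hkey (hK0 0)) (hK0 0)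
    calc ∑ t ∈ Finset.Ico a₁ (a₁ + mA T), _
        ≤ ∑ _t ∈ Finset.Ico a₁ (a₁ + mA T), K 0 * (K 0 * (10 * (mB T:ℝ) * b T)) :=
          Finset.sum_le_sum (fun t _ => hsq t)
      _ = (mA T : ℝ) * (K 0 * (K 0 * (10 * (mB T:ℝ) * b T))) := by
          rw [Finset.sum_const, hcardA, nsmul_eq_mul]
      _ ≤ (30 * (K 0) ^ 2 + 1) * (mA T : ℝ) * (mB T : ℝ) * b T := by
          nlinarith [show (0:ℝ) ≤ (mA T:ℝ) * (mB T:ℝ) * b T by positivity,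
            show (0:ℝ) ≤ (K 0)^2 * ((mA T:ℝ) * (mB T:ℝ) * b T) by positivity]
    done

end
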